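/- For any integer n > 1 and any odd prime p, the p-adic valuation of the greatest common divisor of the binomial coefficients C(2n, 2k) for 0 < k < n equals 1 if 2n = p^i + p^j for some integers 0 ≤ i ≤ j, and equals 0 otherwise. -/
import Mathlib


-- digit sum recursion, valid also at 0
lemma dig_step {p : ℕ} (hp : 1 < p) (x : ℕ) :
    (p.digits x).sum = x % p + (p.digits (x / p)).sum := by
  rcases Nat.eq_zero_or_pos x with h | h
  · simp [h]
  · rw [Nat.digits_def' hp h, List.sum_cons]

-- key additivity: S(c * p^j + x) = c + S(x) for c < p, x < p^j
lemma dig_add {p : ℕ} (hp : 1 < p) :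
    ∀ (j c x : ℕ), c < p → x < p ^ j →
      (p.digits (c * p ^ j + x)).sum = c + (p.digits x).sum := by
  intro j
  induction j with
  | zero =>
    intro c x hc hx
    have hx0 : x = 0 := by simpa using hx
    subst hx0
    rcases Nat.eq_zero_or_pos c with h | h
    · simp [h]
    · rw [pow_zero, mul_one, add_zero, dig_step hp c, Nat.mod_eq_of_lt hc,
        Nat.div_eq_of_lt hc]
  | succ j ih =>
    intro c x hc hx
    rcases Nat.eq_zero_or_pos c with h | h
    · simp [h]
    have hrw : c * p ^ (j + 1) + x = x + c * p ^ j * p := by ring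
    have hxp : x / p < p ^ j := by
      rw [Nat.div_lt_iff_lt_mul (by omega)]
      calc x < p ^ (j+1) := hx
      _ = p ^ j * p := by ring
    rw [hrw, dig_step hp, Nat.add_mul_mod_self_right,
      Nat.add_mul_div_right _ _ (by omega : 0 < p), add_comm (x / p) (c * p ^ j),
      ih c (x / p) hc hxp, dig_step hp x]
    omega

lemma dig_pow {p : ℕ} (hp : 1 < p) (u : ℕ) : (p.digits (p ^ u)).sum = 1 := by
  have := dig_add hp u 1 0 hp (pow_pos (by omega) u)
  simpa using this

lemma dig_pow_add_pow {p : ℕ} (hp : 2 < p) (u v : ℕ) :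
    (p.digits (p ^ u + p ^ v)).sum = 2 := by
  have key : ∀ a b : ℕ, a < b → (p.digits (p ^ a + p ^ b)).sum = 2 := by
    intro a b hab
    have h1 : p ^ a < p ^ b := Nat.pow_lt_pow_right (by omega) hab
    have := dig_add (by omega : 1 < p) b 1 (p ^ a) (by omega) h1
    rw [one_mul, add_comm (p ^ b)] at this
    rw [this, dig_pow (by omega) a]
  rcases lt_trichotomy u v with h | h | h
  · exact key u v h
  · subst h
    have : p ^ u + p ^ u = 2 * p ^ u + 0 := by ring
    rw [this, dig_add (by omega : 1 < p) u 2 0 (by omega) (pow_pos (by omega) u)]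
    simp
  · rw [add_comm]; exact key v u h

-- S(x) = 0 → x = 0
lemma dig_sum_pos {p : ℕ} (hp : 1 < p) : ∀ x : ℕ, (p.digits x).sum = 0 → x = 0 := by
  intro x
  induction x using Nat.strong_induction_on with
  | _ x ih =>
    intro h
    by_contra hx
    rw [dig_step hp x] at h
    have h1 : x % p = 0 := by omega
    have h2 : (p.digits (x / p)).sum = 0 := by omega
    have h3 : x / p < x := Nat.div_lt_self (by omega) hp
    have h5 := ih (x / p) h3 h2
    have h6 : x = x % p := by
      conv_lhs => rw [← Nat.div_add_mod x p]
      rw [h5, Nat.mul_zero, Nat.zero_add]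
    omega

-- parity: for odd p, x even iff digit sum even
lemma dig_parity {p : ℕ} (hodd : p % 2 = 1) (x : ℕ) :
    x % 2 = (p.digits x).sum % 2 :=
  Nat.modEq_digits_sum 2 p hodd x

-- even positive number has digit sum ≥ 2 (base p odd)
lemma dig_two_le {p : ℕ} (hp : 1 < p) (hodd : p % 2 = 1) {x : ℕ} (hx : 0 < x)
    (hev : x % 2 = 0) : 2 ≤ (p.digits x).sum := by
  have h1 := dig_parity hodd x
  have h2 : (p.digits x).sum ≠ 0 := fun h => by have := dig_sum_pos hp x h; omega
  omega

lemma caseB {p n : ℕ} (hp1 : 1 < p) (hp2 : 2 < p) (hodd : p % 2 = 1) (hn : 1 < n)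
    (hex : ∀ i j : ℕ, i ≤ j → 2 * n ≠ p ^ i + p ^ j) :
    ∃ a, 0 < a ∧ a < 2 * n ∧ a % 2 = 0 ∧
      (p.digits a).sum + (p.digits (2 * n - a)).sum = (p.digits (2 * n)).sum := by
  set j := Nat.log p (2 * n) with hj
  have hpj0 : 0 < p ^ j := pow_pos (by omega) j
  obtain ⟨c, r, hrepr, hrlt, hclt, hc1⟩ :
      ∃ c r, c * p ^ j + r = 2 * n ∧ r < p ^ j ∧ c < p ∧ 1 ≤ c := by
    refine ⟨2 * n / p ^ j, 2 * n % p ^ j, ?_, Nat.mod_lt _ hpj0, ?_, ?_⟩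
    · rw [mul_comm]; exact Nat.div_add_mod _ _
    · rw [Nat.div_lt_iff_lt_mul hpj0, ← pow_succ']
      exact Nat.lt_pow_succ_log_self hp1 _
    · rw [Nat.le_div_iff_mul_le hpj0, one_mul]
      exact Nat.pow_log_le_self p (by omega)
  have hS2n : (p.digits (2 * n)).sum = c + (p.digits r).sum := by
    have h2n : 2 * n = c * p ^ j + r := by omega
    rw [h2n, dig_add hp1 j c r hclt hrlt]
  by_cases hc2 : 2 ≤ c
  · -- a = 2 * p ^ j
    have hsub : (c - 2) * p ^ j = c * p ^ j - 2 * p ^ j := Nat.sub_mul _ _ _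
    have hmul : 2 * p ^ j ≤ c * p ^ j := Nat.mul_le_mul_right _ hc2
    have halt : 2 * p ^ j < 2 * n := by
      rcases lt_or_eq_of_le (show 2 * p ^ j ≤ 2 * n by omega) with h | h
      · exact h
      · exact absurd h.symm (by have := hex j j le_rfl; omega)
    refine ⟨2 * p ^ j, by positivity, halt, by omega, ?_⟩
    have hb : 2 * n - 2 * p ^ j = (c - 2) * p ^ j + r := by omega
    rw [hb, dig_add hp1 j (c - 2) r (by omega) hrlt]
    have ha : (p.digits (2 * p ^ j)).sum = 2 := by
      have := dig_add hp1 j 2 0 hp2 hpj0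
      simpa using this
    rw [ha, hS2n]
    omega
  · -- c = 1
    have hc : c = 1 := by omega
    subst hc
    have hpjodd : p ^ j % 2 = 1 := by
      have := Nat.pow_mod p j 2
      rw [hodd, Nat.one_pow] at this
      omega
    have hr0 : 0 < r := by omega
    set u := Nat.log p r with hu
    have hpu0 : 0 < p ^ u := pow_pos (by omega) u
    have hpur : p ^ u ≤ r := Nat.pow_log_le_self p (by omega)
    obtain ⟨d, r', hrepr2, hr'lt, hdlt, hd1⟩ :
        ∃ d r', d * p ^ u + r' = r ∧ r' < p ^ u ∧ d < p ∧ 1 ≤ d := by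
      refine ⟨r / p ^ u, r % p ^ u, ?_, Nat.mod_lt _ hpu0, ?_, ?_⟩
      · rw [mul_comm]; exact Nat.div_add_mod _ _
      · rw [Nat.div_lt_iff_lt_mul hpu0, ← pow_succ']
        exact Nat.lt_pow_succ_log_self hp1 _
      · rw [Nat.le_div_iff_mul_le hpu0, one_mul]; exact hpur
    have hult : u < j := by
      have : p ^ u < p ^ j := lt_of_le_of_lt hpur hrlt
      exact (Nat.pow_lt_pow_iff_right hp1).mp this
    have hpuodd : p ^ u % 2 = 1 := by
      have := Nat.pow_mod p u 2
      rw [hodd, Nat.one_pow] at this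
      omega
    have halt : p ^ j + p ^ u < 2 * n := by
      rcases lt_or_eq_of_le (show p ^ j + p ^ u ≤ 2 * n by omega) with h | h
      · exact h
      · exact absurd h.symm (by have := hex u j hult.le; omega)
    refine ⟨p ^ j + p ^ u, by positivity, halt, by omega, ?_⟩
    have hsub : (d - 1) * p ^ u = d * p ^ u - 1 * p ^ u := Nat.sub_mul _ _ _
    have hmul : 1 * p ^ u ≤ d * p ^ u := Nat.mul_le_mul_right _ hd1
    have hb : 2 * n - (p ^ j + p ^ u) = (d - 1) * p ^ u + r' := by omega
    rw [hb, dig_add hp1 u (d - 1) r' (by omega) hr'lt]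
    rw [dig_pow_add_pow hp2 j u, hS2n]
    have hSr : (p.digits r).sum = d + (p.digits r').sum := by
      have h2 : r = d * p ^ u + r' := by omega
      rw [h2, dig_add hp1 u d r' hdlt hr'lt]
    omega

open Classical in
theorem stmt_2 (n p : ℕ) (hn : 1 < n) (hp : p.Prime) (hodd : Odd p) :
    padicValNat p ((Finset.Ioo 0 n).gcd (fun k => (2 * n).choose (2 * k))) =
      if ∃ i j : ℕ, i ≤ j ∧ 2 * n = p ^ i + p ^ j then 1 else 0 := by
  haveI : Fact p.Prime := ⟨hp⟩
  have hp1 : 1 < p := hp.one_lt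
  have hoddm : p % 2 = 1 := Nat.odd_iff.mp hodd
  have hp2 : 2 < p := by have := hp.two_le; omega
  have h1mem : (1 : ℕ) ∈ Finset.Ioo 0 n := by rw [Finset.mem_Ioo]; omega
  set f : ℕ → ℕ := fun k => (2 * n).choose (2 * k) with hf
  have hfpos : ∀ k, k < n → 0 < (2 * n).choose (2 * k) :=
    fun k hk => Nat.choose_pos (by omega)
  have hGne : (Finset.Ioo 0 n).gcd f ≠ 0 := by
    intro h
    have h2 := Finset.gcd_eq_zero_iff.mp h 1 h1mem
    exact absurd h2 (hfpos 1 hn).ne'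
  have kum : ∀ a : ℕ, a ≤ 2 * n →
      (p - 1) * padicValNat p ((2 * n).choose a) =
        (p.digits a).sum + (p.digits (2 * n - a)).sum - (p.digits (2 * n)).sum :=
    fun a ha => sub_one_mul_padicValNat_choose_eq_sub_sum_digits ha
  split_ifs with hex
  · obtain ⟨i, j, hij, hsum⟩ := hex
    have hj1 : 1 ≤ j := by
      by_contra h
      have hj0 : j = 0 := by omega
      have hi0 : i = 0 := by omega
      subst hj0; subst hi0
      simp at hsum; omega
    have hS2n : (p.digits (2 * n)).sum = 2 := by
      rw [hsum]; exact dig_pow_add_pow hp2 i j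
    -- lower bound
    have hdvd : ∀ k ∈ Finset.Ioo 0 n, p ∣ f k := by
      intro k hk
      rw [Finset.mem_Ioo] at hk
      have ha2 : 2 ≤ (p.digits (2 * k)).sum :=
        dig_two_le hp1 hoddm (by omega) (by omega)
      have hb2 : 2 ≤ (p.digits (2 * n - 2 * k)).sum :=
        dig_two_le hp1 hoddm (by omega) (by omega)
      have hk2 := kum (2 * k) (by omega)
      rw [hS2n] at hk2
      have hv : padicValNat p ((2 * n).choose (2 * k)) ≠ 0 := by
        intro h0
        rw [h0, Nat.mul_zero] at hk2
        omega
      exact dvd_trans (dvd_pow_self p hv) pow_padicValNat_dvd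
    have hge : 1 ≤ padicValNat p ((Finset.Ioo 0 n).gcd f) := by
      have hpd : p ∣ (Finset.Ioo 0 n).gcd f := Finset.dvd_gcd hdvd
      have h2 := (padicValNat_dvd_iff (p := p) 1 ((Finset.Ioo 0 n).gcd f)).mp (by rw [pow_one]; exact hpd)
      rcases h2 with h | h
      · exact absurd h hGne
      · exact h
    -- upper bound via k0 = m * p^(j-1)
    obtain ⟨m, hm⟩ := hodd
    have hm1 : 1 ≤ m := by omega
    set q := p ^ (j - 1) with hq
    have hq0 : 0 < q := pow_pos (by omega) _
    have hpj : p ^ j = p * q := by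
      rw [hq, ← pow_succ']
      congr 1
      omega
    have h2k0 : 2 * (m * q) = (p - 1) * q := by
      have hpm : p - 1 = 2 * m := by omega
      rw [hpm]; ring
    have hql : (p - 1) * q < p * q := by
      exact (Nat.mul_lt_mul_right hq0).mpr (by omega)
    have hpj2n : p ^ j ≤ 2 * n := by omega
    have hk0mem : m * q ∈ Finset.Ioo 0 n := by
      rw [Finset.mem_Ioo]
      refine ⟨by positivity, by omega⟩
    have hvk0 : padicValNat p ((2 * n).choose (2 * (m * q))) = 1 := by
      have hkum := kum (2 * (m * q)) (by omega)
      have hSa : (p.digits (2 * (m * q))).sum = p - 1 := by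
        rw [h2k0, hq]
        have := dig_add hp1 (j - 1) (p - 1) 0 (by omega) (pow_pos (by omega) _)
        simpa using this
      have hbe : 2 * n - 2 * (m * q) = p ^ i + q := by
        have h3 : (p - 1) * q = p * q - 1 * q := Nat.sub_mul _ _ _
        have h4 : 1 * q ≤ p * q := Nat.mul_le_mul_right _ (by omega)
        omega
      have hSb : (p.digits (2 * n - 2 * (m * q))).sum = 2 := by
        rw [hbe, hq]; exact dig_pow_add_pow hp2 i (j - 1)
      rw [hSa, hSb, hS2n] at hkum
      have heq : (p - 1) * padicValNat p ((2 * n).choose (2 * (m * q))) = (p - 1) * 1 := by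
        rw [Nat.mul_one]; omega
      exact Nat.eq_of_mul_eq_mul_left (by omega) heq
    have hle : padicValNat p ((Finset.Ioo 0 n).gcd f) ≤ 1 := by
      have hdg : (Finset.Ioo 0 n).gcd f ∣ f (m * q) := Finset.gcd_dvd hk0mem
      have hpow := dvd_trans (pow_padicValNat_dvd (p := p)) hdg
      rcases (padicValNat_dvd_iff _ _).mp hpow with h | h
      · rw [Finset.mem_Ioo] at hk0mem
        exact absurd h (hfpos (m * q) hk0mem.2).ne'
      · rw [show f (m * q) = (2 * n).choose (2 * (m * q)) from rfl, hvk0] at h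
        exact h
    omega
  · push_neg at hex
    obtain ⟨a, ha0, ha2n, haev, hasum⟩ := caseB hp1 hp2 hoddm hn hex
    obtain ⟨k, hk⟩ : ∃ k, a = 2 * k := ⟨a / 2, by omega⟩
    subst hk
    have hkmem : k ∈ Finset.Ioo 0 n := by rw [Finset.mem_Ioo]; omega
    have hkum := kum (2 * k) (by omega)
    have hv0 : padicValNat p ((2 * n).choose (2 * k)) = 0 := by
      have h0 : (p.digits (2 * k)).sum + (p.digits (2 * n - 2 * k)).sum
          - (p.digits (2 * n)).sum = 0 := by omega
      rw [h0] at hkum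
      rcases Nat.mul_eq_zero.mp hkum with h | h
      · omega
      · exact h
    have hdg : (Finset.Ioo 0 n).gcd f ∣ f k := Finset.gcd_dvd hkmem
    have hpow := dvd_trans (pow_padicValNat_dvd (p := p)) hdg
    rcases (padicValNat_dvd_iff _ _).mp hpow with h | h
    · rw [Finset.mem_Ioo] at hkmem
      exact absurd h (hfpos k hkmem.2).ne'
    · rw [show f k = (2 * n).choose (2 * k) from rfl, hv0] at h
      omega
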